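/- For every integer n ≥ 3, the sum over i = 1 to n−2 of sin²(π/n) / (sin(iπ/n)·sin((i+1)π/n)) equals 2·cos(π/n). -/

import Mathlib

open Real Finset

theorem sum_sin_sq_div_eq (n : ℕ) (hn : 3 ≤ n) :
    ∑ i ∈ Finset.Icc 1 (n - 2),
      Real.sin (Real.pi / n) ^ 2 /
        (Real.sin (i * Real.pi / n) * Real.sin ((i + 1) * Real.pi / n)) =
      2 * Real.cos (Real.pi / n) := by
  have hn0 : (0:ℝ) < n := by positivity
  have hnn : (0:ℝ) < n := hn0
  have hsin : ∀ i : ℕ, 1 ≤ i → i ≤ n - 1 → 0 < Real.sin (i * Real.pi / n) := by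
    intro i h1 h2
    apply Real.sin_pos_of_pos_of_lt_pi
    · have : (1:ℝ) ≤ i := by exact_mod_cast h1
      positivity
    · have hi : (i:ℝ) < n := by
        have : i < n := lt_of_le_of_lt h2 (by omega)
        exact_mod_cast this
      rw [div_lt_iff₀ hn0] at *
      calc (i:ℝ) * Real.pi < n * Real.pi := by
            exact mul_lt_mul_of_pos_right hi Real.pi_pos
        _ = Real.pi * n := by ring
  have key : ∀ i ∈ Finset.Icc 1 (n - 2),
      Real.sin (Real.pi / n) ^ 2 /
        (Real.sin (i * Real.pi / n) * Real.sin ((i + 1) * Real.pi / n)) =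
      Real.sin (Real.pi / n) * (Real.cos (i * Real.pi / n) / Real.sin (i * Real.pi / n)
        - Real.cos ((i + 1) * Real.pi / n) / Real.sin ((i + 1) * Real.pi / n)) := by
    intro i hi
    simp only [Finset.mem_Icc] at hi
    have h1 := hsin i hi.1 (by omega)
    have h2 := hsin (i + 1) (by omega) (by omega)
    push_cast at h2
    have hdiff : Real.sin ((i + 1 : ℝ) * Real.pi / n - i * Real.pi / n)
        = Real.sin (Real.pi / n) := by
      congr 1; field_simp; ring
    rw [Real.sin_sub] at hdiff
    rw [div_sub_div _ _ h1.ne' h2.ne']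
    have hnum : Real.cos (i * Real.pi / n) * Real.sin ((i + 1) * Real.pi / n)
        - Real.sin (i * Real.pi / n) * Real.cos ((i + 1) * Real.pi / n) = Real.sin (Real.pi / n) := by
      linear_combination hdiff
    rw [hnum, pow_two, mul_div_assoc]
  rw [Finset.sum_congr rfl key]
  rw [show Finset.Icc 1 (n-2) = Finset.Ico 1 (n-1) from by rw [← Finset.Ico_add_one_right_eq_Icc]; congr 1; omega, Finset.sum_Ico_eq_sum_range]
  have hF := Finset.sum_range_sub' (fun i : ℕ =>
    Real.sin (Real.pi / n) * (Real.cos ((1 + i : ℕ) * Real.pi / n) / Real.sin ((1 + i : ℕ) * Real.pi / n))) (n - 2)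
  have : ∑ i ∈ Finset.range (n - 1 - 1),
      Real.sin (Real.pi / n) * (Real.cos ((1 + i : ℕ) * Real.pi / n) / Real.sin ((1 + i : ℕ) * Real.pi / n)
        - Real.cos (((1 + i : ℕ) + 1) * Real.pi / n) / Real.sin (((1 + i : ℕ) + 1) * Real.pi / n))
      = Real.sin (Real.pi / n) * (Real.cos ((1:ℕ) * Real.pi / n) / Real.sin ((1:ℕ) * Real.pi / n))
        - Real.sin (Real.pi / n) * (Real.cos ((1 + (n - 2) : ℕ) * Real.pi / n) / Real.sin ((1 + (n - 2) : ℕ) * Real.pi / n)) := by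
    have hr : n - 1 - 1 = n - 2 := by omega
    rw [hr, ← hF]
    apply Finset.sum_congr rfl
    intro i _
    push_cast
    ring
  rw [show (n - 1 - 1) = n - 2 from by omega] at this
  -- align casts: in `this` the summand uses ((1+i : ℕ) : ℝ); goal sum uses casts differently
  have hsum : ∑ i ∈ Finset.range (n - 2),
      Real.sin (Real.pi / n) * (Real.cos ((1 + i : ℝ) * Real.pi / n) / Real.sin ((1 + i : ℝ) * Real.pi / n)
        - Real.cos (((1 + i : ℝ) + 1) * Real.pi / n) / Real.sin (((1 + i : ℝ) + 1) * Real.pi / n))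
      = Real.sin (Real.pi / n) * (Real.cos ((1:ℕ) * Real.pi / n) / Real.sin ((1:ℕ) * Real.pi / n))
        - Real.sin (Real.pi / n) * (Real.cos ((1 + (n - 2) : ℕ) * Real.pi / n) / Real.sin ((1 + (n - 2) : ℕ) * Real.pi / n)) := by
    rw [← this]
    apply Finset.sum_congr rfl
    intro i _
    push_cast
    ring_nf
  calc ∑ i ∈ Finset.range (n - 2),
      Real.sin (Real.pi / n) * (Real.cos ((1 + i : ℕ) * Real.pi / n) / Real.sin ((1 + i : ℕ) * Real.pi / n)
        - Real.cos (((1 + i : ℕ) + 1) * Real.pi / n) / Real.sin (((1 + i : ℕ) + 1) * Real.pi / n))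
      = Real.sin (Real.pi / n) * (Real.cos ((1:ℕ) * Real.pi / n) / Real.sin ((1:ℕ) * Real.pi / n))
        - Real.sin (Real.pi / n) * (Real.cos ((1 + (n - 2) : ℕ) * Real.pi / n) / Real.sin ((1 + (n - 2) : ℕ) * Real.pi / n)) := this
    _ = 2 * Real.cos (Real.pi / n) := by
        have h1 : ((1:ℕ) : ℝ) * Real.pi / n = Real.pi / n := by push_cast; ring
        have hcast : ((1 + (n - 2) : ℕ) : ℝ) = (n : ℝ) - 1 := by
          have : (1 + (n - 2) : ℕ) = n - 1 := by omega
          rw [this]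
          have : (1:ℕ) ≤ n := by omega
          push_cast [this]
          ring
        have h2 : ((1 + (n - 2) : ℕ) : ℝ) * Real.pi / n = Real.pi - Real.pi / n := by
          rw [hcast]; field_simp
        rw [h1, h2, Real.cos_pi_sub, Real.sin_pi_sub]
        have hs : Real.sin (Real.pi / n) ≠ 0 := by
          have := hsin 1 le_rfl (by omega)
          norm_num at this
          linarith
        field_simp
        ring
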